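/- With the scatter halfspace depth HD as above, for every α ≥ 0 the depth region R(α) = {Σ ∈ 𝒫_k : HD(Σ) ≥ α} is a convex subset of the symmetric matrices. -/

import Mathlib

open MeasureTheory Matrix

/-- Largest "eigenvalue" via the Rayleigh quotient (equals the largest eigenvalue
for symmetric matrices). -/
noncomputable def lamMax {k : ℕ} (A : Matrix (Fin k) (Fin k) ℝ) : ℝ :=
  ⨆ u : {u : Fin k → ℝ // u ⬝ᵥ u = 1}, u.1 ⬝ᵥ A *ᵥ u.1

/-- Smallest "eigenvalue" via the Rayleigh quotient. -/
noncomputable def lamMin {k : ℕ} (A : Matrix (Fin k) (Fin k) ℝ) : ℝ :=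
  ⨅ u : {u : Fin k → ℝ // u ⬝ᵥ u = 1}, u.1 ⬝ᵥ A *ᵥ u.1

/-- The scatter halfspace depth of a scatter matrix `Sg` w.r.t. the probability
measure `P`, with location `T`. -/
noncomputable def HD {k : ℕ} (P : Measure (Fin k → ℝ)) (T : Fin k → ℝ)
    (Sg : Matrix (Fin k) (Fin k) ℝ) : ℝ :=
  ⨅ u : {u : Fin k → ℝ // u ⬝ᵥ u = 1},
    min (P {x | |u.1 ⬝ᵥ (x - T)| ≤ Real.sqrt (u.1 ⬝ᵥ Sg *ᵥ u.1)}).toReal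
        (P {x | Real.sqrt (u.1 ⬝ᵥ Sg *ᵥ u.1) ≤ |u.1 ⬝ᵥ (x - T)|}).toReal

/-- Matrix square root via the continuous functional calculus. -/
noncomputable def msqrt {k : ℕ} (A : Matrix (Fin k) (Fin k) ℝ) : Matrix (Fin k) (Fin k) ℝ :=
  cfc Real.sqrt A

/-- Matrix logarithm via the continuous functional calculus. -/
noncomputable def mlog {k : ℕ} (A : Matrix (Fin k) (Fin k) ℝ) : Matrix (Fin k) (Fin k) ℝ :=
  cfc Real.log A

/-- Matrix real power via the continuous functional calculus. -/
noncomputable def mpow {k : ℕ} (A : Matrix (Fin k) (Fin k) ℝ) (t : ℝ) :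
    Matrix (Fin k) (Fin k) ℝ :=
  cfc (fun x : ℝ => x ^ t) A

/-- The geodesic path from `A` to `B` in the space of positive definite matrices. -/
noncomputable def geoPath {k : ℕ} (A B : Matrix (Fin k) (Fin k) ℝ) (t : ℝ) :
    Matrix (Fin k) (Fin k) ℝ :=
  msqrt A * mpow ((msqrt A)⁻¹ * B * (msqrt A)⁻¹) t * msqrt A

/-- The harmonic path from `A` to `B`. -/
noncomputable def harmPath {k : ℕ} (A B : Matrix (Fin k) (Fin k) ℝ) (t : ℝ) :
    Matrix (Fin k) (Fin k) ℝ :=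
  ((1 - t) • A⁻¹ + t • B⁻¹)⁻¹

/-- Frobenius norm of a matrix. -/
noncomputable def frob {k : ℕ} (A : Matrix (Fin k) (Fin k) ℝ) : ℝ :=
  Real.sqrt (∑ i, ∑ j, (A i j) ^ 2)

/-- Geodesic distance on the space of positive definite matrices. -/
noncomputable def dg {k : ℕ} (A B : Matrix (Fin k) (Fin k) ℝ) : ℝ :=
  frob (mlog ((msqrt A)⁻¹ * B * (msqrt A)⁻¹))

/-- Sign vectors in `{-1,1}^k`. -/
def SignVec (k : ℕ) := {s : Fin k → ℝ // ∀ i, s i = 1 ∨ s i = -1}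

section Aux


private lemma convex_comb_between {a b p q : ℝ} (ha : 0 ≤ a) (hb : 0 ≤ b) (hab : a + b = 1) :
    min p q ≤ a * p + b * q ∧ a * p + b * q ≤ max p q := by
  constructor
  · have h0 : min p q = a * min p q + b * min p q := by rw [← add_mul, hab, one_mul]
    linarith [mul_le_mul_of_nonneg_left (min_le_left p q) ha,
      mul_le_mul_of_nonneg_left (min_le_right p q) hb]
  · have h0 : max p q = a * max p q + b * max p q := by rw [← add_mul, hab, one_mul]
    linarith [mul_le_mul_of_nonneg_left (le_max_left p q) ha,
      mul_le_mul_of_nonneg_left (le_max_right p q) hb]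

private lemma toReal_meas_mono {k : ℕ} (P : Measure (Fin k → ℝ)) [IsProbabilityMeasure P]
    {s t : Set (Fin k → ℝ)} (h : s ⊆ t) : (P s).toReal ≤ (P t).toReal :=
  ENNReal.toReal_mono (measure_ne_top P t) (measure_mono h)

private lemma HD_bdd {k : ℕ} (P : Measure (Fin k → ℝ)) (T : Fin k → ℝ)
    (Sg : Matrix (Fin k) (Fin k) ℝ) :
    BddBelow (Set.range fun u : {u : Fin k → ℝ // u ⬝ᵥ u = 1} =>
      min (P {x | |u.1 ⬝ᵥ (x - T)| ≤ Real.sqrt (u.1 ⬝ᵥ Sg *ᵥ u.1)}).toReal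
          (P {x | Real.sqrt (u.1 ⬝ᵥ Sg *ᵥ u.1) ≤ |u.1 ⬝ᵥ (x - T)|}).toReal) := by
  refine ⟨0, ?_⟩
  rintro x ⟨u, rfl⟩
  exact le_min ENNReal.toReal_nonneg ENNReal.toReal_nonneg

end Aux

/-- for every `α ≥ 0`, the scatter halfspace depth region
`R(α) = {Σ ∈ 𝒫_k : HD_P(Σ) ≥ α}` is convex. -/
theorem HD_region_convex {k : ℕ} (P : Measure (Fin k → ℝ)) [IsProbabilityMeasure P]
    (T : Fin k → ℝ) (α : ℝ) (hα : 0 ≤ α) :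
    Convex ℝ {Sg : Matrix (Fin k) (Fin k) ℝ | Sg.PosDef ∧ α ≤ HD P T Sg} := by
  rintro A ⟨hA, hAd⟩ B ⟨hB, hBd⟩ a b ha hb hab
  have quad : ∀ u : Fin k → ℝ, u ⬝ᵥ (a • A + b • B) *ᵥ u
      = a * (u ⬝ᵥ A *ᵥ u) + b * (u ⬝ᵥ B *ᵥ u) := by
    intro u
    simp [Matrix.add_mulVec, Matrix.smul_mulVec, dotProduct_add, dotProduct_smul,
      smul_eq_mul]
  constructor
  · -- positive definiteness
    refine Matrix.PosDef.of_dotProduct_mulVec_pos ?_ ?_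
    · have : ((a • A + b • B) : Matrix (Fin k) (Fin k) ℝ).conjTranspose
          = a • A.conjTranspose + b • B.conjTranspose := by
        simp
      simp only [Matrix.IsHermitian, this, hA.1.eq, hB.1.eq]
    · intro x hx
      have hpx : (0:ℝ) < x ⬝ᵥ A *ᵥ x := by simpa using hA.dotProduct_mulVec_pos hx
      have hqx : (0:ℝ) < x ⬝ᵥ B *ᵥ x := by simpa using hB.dotProduct_mulVec_pos hx
      have := (convex_comb_between (p := x ⬝ᵥ A *ᵥ x) (q := x ⬝ᵥ B *ᵥ x) ha hb hab).1
      have : (0:ℝ) < x ⬝ᵥ (a • A + b • B) *ᵥ x := by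
        rw [quad x]
        exact lt_of_lt_of_le (lt_min hpx hqx) this
      simpa using this
  · -- depth bound
    unfold HD
    cases isEmpty_or_nonempty {u : Fin k → ℝ // u ⬝ᵥ u = 1} with
    | inl h =>
      have hA0 : HD P T A = 0 := by unfold HD; exact Real.iInf_of_isEmpty _
      rw [Real.iInf_of_isEmpty]
      rw [hA0] at hAd
      exact hAd
    | inr h =>
      refine le_ciInf fun u => ?_
      -- per-direction bound
      set p := u.1 ⬝ᵥ A *ᵥ u.1 with hp
      set q := u.1 ⬝ᵥ B *ᵥ u.1 with hq
      have hquad := quad u.1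
      have hbet := convex_comb_between (p := p) (q := q) ha hb hab
      set s : ℝ := Real.sqrt (u.1 ⬝ᵥ (a • A + b • B) *ᵥ u.1) with hs
      have hAu : α ≤ min (P {x | |u.1 ⬝ᵥ (x - T)| ≤ Real.sqrt p}).toReal
          (P {x | Real.sqrt p ≤ |u.1 ⬝ᵥ (x - T)|}).toReal :=
        le_trans hAd (ciInf_le (HD_bdd P T A) u)
      have hBu : α ≤ min (P {x | |u.1 ⬝ᵥ (x - T)| ≤ Real.sqrt q}).toReal
          (P {x | Real.sqrt q ≤ |u.1 ⬝ᵥ (x - T)|}).toReal :=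
        le_trans hBd (ciInf_le (HD_bdd P T B) u)
      have hslo : min (Real.sqrt p) (Real.sqrt q) ≤ s := by
        rw [hs, hquad]
        rcases le_total p q with hpq | hpq
        · rw [min_eq_left (Real.sqrt_le_sqrt hpq)]
          exact Real.sqrt_le_sqrt (le_trans (by rw [min_eq_left hpq]) hbet.1)
        · rw [min_eq_right (Real.sqrt_le_sqrt hpq)]
          exact Real.sqrt_le_sqrt (le_trans (by rw [min_eq_right hpq]) hbet.1)
      have hshi : s ≤ max (Real.sqrt p) (Real.sqrt q) := by
        rw [hs, hquad]
        rcases le_total p q with hpq | hpq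
        · rw [max_eq_right (Real.sqrt_le_sqrt hpq)]
          exact Real.sqrt_le_sqrt (le_trans hbet.2 (by rw [max_eq_right hpq]))
        · rw [max_eq_left (Real.sqrt_le_sqrt hpq)]
          exact Real.sqrt_le_sqrt (le_trans hbet.2 (by rw [max_eq_left hpq]))
      -- combine via monotonicity
      refine le_min ?_ ?_
      · -- first component: increasing in s
        rcases le_total (Real.sqrt p) (Real.sqrt q) with hpq | hpq
        · have h1 : Real.sqrt p ≤ s := le_trans (by rw [min_eq_left hpq]) hslo
          refine le_trans (le_trans hAu (min_le_left _ _)) (toReal_meas_mono P ?_)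
          intro x hx; exact le_trans hx h1
        · have h1 : Real.sqrt q ≤ s := le_trans (by rw [min_eq_right hpq]) hslo
          refine le_trans (le_trans hBu (min_le_left _ _)) (toReal_meas_mono P ?_)
          intro x hx; exact le_trans hx h1
      · -- second component: decreasing in s
        rcases le_total (Real.sqrt p) (Real.sqrt q) with hpq | hpq
        · have h1 : s ≤ Real.sqrt q := le_trans hshi (by rw [max_eq_right hpq])
          refine le_trans (le_trans hBu (min_le_right _ _)) (toReal_meas_mono P ?_)
          intro x hx; exact le_trans h1 hx
        · have h1 : s ≤ Real.sqrt p := le_trans hshi (by rw [max_eq_left hpq])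
          refine le_trans (le_trans hAu (min_le_right _ _)) (toReal_meas_mono P ?_)
          intro x hx; exact le_trans h1 hx
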